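/- For a C² function u on an open U ⊆ ℝ² with W = sqrt(1+u_x²+u_y²), the following are equivalent: (i) u satisfies the minimal surface equation (1+u_y²)u_xx − 2u_x u_y u_xy + (1+u_x²)u_yy = 0; (ii) the three 1-forms ω₁ = (u_x u_y dx + (1+u_y²)dy)/W, ω₂ = (−(1+u_x²)dx − u_x u_y dy)/W, ω₃ = (−u_y dx + u_x dy)/W are all closed on U. -/

import Mathlib

/-- `∂u/∂x` on `ℝ²`. -/
noncomputable def ux (u : ℝ × ℝ → ℝ) (z : ℝ × ℝ) : ℝ := fderiv ℝ u z (1, 0)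

/-- `∂u/∂y` on `ℝ²`. -/
noncomputable def uy (u : ℝ × ℝ → ℝ) (z : ℝ × ℝ) : ℝ := fderiv ℝ u z (0, 1)

/-- `W = √(1 + u_x² + u_y²)`. -/
noncomputable def Wfun (u : ℝ × ℝ → ℝ) (z : ℝ × ℝ) : ℝ :=
  Real.sqrt (1 + ux u z ^ 2 + uy u z ^ 2)

private lemma quot_fderiv {P Q N : ℝ × ℝ → ℝ} {P' Q' N' : ℝ × ℝ →L[ℝ] ℝ} {z : ℝ × ℝ}
    (hP : HasFDerivAt P P' z) (hQ : HasFDerivAt Q Q' z) (hN : HasFDerivAt N N' z)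
    (v : ℝ × ℝ) :
    fderiv ℝ (fun w => N w / Real.sqrt (1 + P w ^ 2 + Q w ^ 2)) z v =
      (N' v * (1 + P z ^ 2 + Q z ^ 2) - N z * (P z * P' v + Q z * Q' v)) /
        Real.sqrt (1 + P z ^ 2 + Q z ^ 2) ^ 3 := by
  have hgpos : (0:ℝ) < 1 + P z ^ 2 + Q z ^ 2 := by positivity
  have hg : HasFDerivAt (fun w => 1 + P w ^ 2 + Q w ^ 2)
      ((P z • P' + P z • P') + (Q z • Q' + Q z • Q')) z := by
    simpa [pow_two, Pi.add_def, Pi.mul_def] using ((hP.mul hP).const_add 1).add (hQ.mul hQ)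
  have hs : HasFDerivAt (fun w => Real.sqrt (1 + P w ^ 2 + Q w ^ 2))
      ((1 / (2 * Real.sqrt (1 + P z ^ 2 + Q z ^ 2))) •
        ((P z • P' + P z • P') + (Q z • Q' + Q z • Q'))) z :=
    hg.sqrt (ne_of_gt hgpos)
  have hWpos : (0:ℝ) < Real.sqrt (1 + P z ^ 2 + Q z ^ 2) := Real.sqrt_pos.2 hgpos
  have hWne : Real.sqrt (1 + P z ^ 2 + Q z ^ 2) ≠ 0 := ne_of_gt hWpos
  have hinv : HasFDerivAt (fun w => (Real.sqrt (1 + P w ^ 2 + Q w ^ 2))⁻¹)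
      ((-(Real.sqrt (1 + P z ^ 2 + Q z ^ 2) ^ 2)⁻¹) •
        ((1 / (2 * Real.sqrt (1 + P z ^ 2 + Q z ^ 2))) •
          ((P z • P' + P z • P') + (Q z • Q' + Q z • Q')))) z :=
    (hasDerivAt_inv hWne).comp_hasFDerivAt z hs
  have hprod := hN.mul hinv
  have hfd : fderiv ℝ (fun w => N w / Real.sqrt (1 + P w ^ 2 + Q w ^ 2)) z =
      (N z • ((-(Real.sqrt (1 + P z ^ 2 + Q z ^ 2) ^ 2)⁻¹) •
        ((1 / (2 * Real.sqrt (1 + P z ^ 2 + Q z ^ 2))) •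
          ((P z • P' + P z • P') + (Q z • Q' + Q z • Q')))) +
        (Real.sqrt (1 + P z ^ 2 + Q z ^ 2))⁻¹ • N') := by
    simp only [div_eq_mul_inv]
    exact hprod.fderiv
  rw [hfd]
  have hsq : Real.sqrt (1 + P z ^ 2 + Q z ^ 2) ^ 2 = 1 + P z ^ 2 + Q z ^ 2 :=
    Real.sq_sqrt hgpos.le
  have hcube : Real.sqrt (1 + P z ^ 2 + Q z ^ 2) ^ 3 =
      (1 + P z ^ 2 + Q z ^ 2) * Real.sqrt (1 + P z ^ 2 + Q z ^ 2) := by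
    rw [pow_succ, hsq]
  simp only [ContinuousLinearMap.add_apply, ContinuousLinearMap.smul_apply, smul_eq_mul]
  rw [hcube, hsq]
  field_simp
  ring

/-- for a C² function `u` on an open `U ⊆ ℝ²`, the minimal surface equation
holds on `U` if and only if the three Noether-current 1-forms
`ω₁ = (u_x u_y dx + (1+u_y²) dy)/W`, `ω₂ = (−(1+u_x²) dx − u_x u_y dy)/W`,
`ω₃ = (−u_y dx + u_x dy)/W` are all closed on `U`. -/
theorem minimal_surface_equation_iff_noether_currents_closed
    (U : Set (ℝ × ℝ)) (hU : IsOpen U) (u : ℝ × ℝ → ℝ) (hu : ContDiffOn ℝ 2 u U) :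
    (∀ z ∈ U,
      (1 + uy u z ^ 2) * fderiv ℝ (ux u) z (1, 0)
        - 2 * ux u z * uy u z * fderiv ℝ (ux u) z (0, 1)
        + (1 + ux u z ^ 2) * fderiv ℝ (uy u) z (0, 1) = 0) ↔
    (∀ z ∈ U,
      (fderiv ℝ (fun w => ux u w * uy u w / Wfun u w) z (0, 1) =
        fderiv ℝ (fun w => (1 + uy u w ^ 2) / Wfun u w) z (1, 0)) ∧
      (fderiv ℝ (fun w => -(1 + ux u w ^ 2) / Wfun u w) z (0, 1) =
        fderiv ℝ (fun w => -(ux u w * uy u w) / Wfun u w) z (1, 0)) ∧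
      (fderiv ℝ (fun w => -(uy u w) / Wfun u w) z (0, 1) =
        fderiv ℝ (fun w => ux u w / Wfun u w) z (1, 0))) := by
  have main : ∀ z ∈ U,
      ((1 + uy u z ^ 2) * fderiv ℝ (ux u) z (1, 0)
        - 2 * ux u z * uy u z * fderiv ℝ (ux u) z (0, 1)
        + (1 + ux u z ^ 2) * fderiv ℝ (uy u) z (0, 1) = 0) ↔
      ((fderiv ℝ (fun w => ux u w * uy u w / Wfun u w) z (0, 1) =
        fderiv ℝ (fun w => (1 + uy u w ^ 2) / Wfun u w) z (1, 0)) ∧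
      (fderiv ℝ (fun w => -(1 + ux u w ^ 2) / Wfun u w) z (0, 1) =
        fderiv ℝ (fun w => -(ux u w * uy u w) / Wfun u w) z (1, 0)) ∧
      (fderiv ℝ (fun w => -(uy u w) / Wfun u w) z (0, 1) =
        fderiv ℝ (fun w => ux u w / Wfun u w) z (1, 0))) := by
    intro z hz
    have hu2 : ContDiffAt ℝ 2 u z := hu.contDiffAt (hU.mem_nhds hz)
    have hf1 : ContDiffAt ℝ 1 (fderiv ℝ u) z := hu2.fderiv_right (by norm_num)
    have hfd : DifferentiableAt ℝ (fderiv ℝ u) z := hf1.differentiableAt one_ne_zero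
    have hPdiff : DifferentiableAt ℝ (ux u) z :=
      hfd.clm_apply (differentiableAt_const _)
    have hQdiff : DifferentiableAt ℝ (uy u) z :=
      hfd.clm_apply (differentiableAt_const _)
    have hP : HasFDerivAt (ux u) (fderiv ℝ (ux u) z) z := hPdiff.hasFDerivAt
    have hQ : HasFDerivAt (uy u) (fderiv ℝ (uy u) z) z := hQdiff.hasFDerivAt
    -- symmetry of second derivatives
    have hsym : IsSymmSndFDerivAt ℝ u z := hu2.isSymmSndFDerivAt (by norm_num)
    have e1 : fderiv ℝ (ux u) z = (fderiv ℝ (fderiv ℝ u) z).flip ((1:ℝ), (0:ℝ)) := by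
      have h : ux u = fun w => fderiv ℝ u w ((1:ℝ), (0:ℝ)) := rfl
      rw [h, fderiv_clm_apply hfd (differentiableAt_const _)]
      simp
    have e2 : fderiv ℝ (uy u) z = (fderiv ℝ (fderiv ℝ u) z).flip ((0:ℝ), (1:ℝ)) := by
      have h : uy u = fun w => fderiv ℝ u w ((0:ℝ), (1:ℝ)) := rfl
      rw [h, fderiv_clm_apply hfd (differentiableAt_const _)]
      simp
    have hsymm : fderiv ℝ (uy u) z ((1:ℝ), (0:ℝ)) = fderiv ℝ (ux u) z ((0:ℝ), (1:ℝ)) := by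
      rw [e1, e2]
      simpa using hsym ((1:ℝ),(0:ℝ)) ((0:ℝ),(1:ℝ))
    have hW3 : Real.sqrt (1 + ux u z ^ 2 + uy u z ^ 2) ^ 3 ≠ 0 := by positivity
    -- numerator derivatives
    have hN1 : HasFDerivAt (fun w => ux u w * uy u w)
        (ux u z • fderiv ℝ (uy u) z + uy u z • fderiv ℝ (ux u) z) z := hP.mul hQ
    have hN2 : HasFDerivAt (fun w => 1 + uy u w ^ 2)
        (uy u z • fderiv ℝ (uy u) z + uy u z • fderiv ℝ (uy u) z) z := by
      simpa [pow_two] using (hQ.mul hQ).const_add 1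
    have hN3 : HasFDerivAt (fun w => -(1 + ux u w ^ 2))
        (-(ux u z • fderiv ℝ (ux u) z + ux u z • fderiv ℝ (ux u) z)) z := by
      simpa [pow_two, Pi.neg_def] using ((hP.mul hP).const_add 1).neg
    have hN4 : HasFDerivAt (fun w => -(ux u w * uy u w))
        (-(ux u z • fderiv ℝ (uy u) z + uy u z • fderiv ℝ (ux u) z)) z :=
      (hP.mul hQ).neg
    have hN5 : HasFDerivAt (fun w => -(uy u w)) (-(fderiv ℝ (uy u) z)) z := hQ.neg
    have hN6 : HasFDerivAt (ux u) (fderiv ℝ (ux u) z) z := hP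
    have fA : fderiv ℝ (fun w => ux u w * uy u w / Wfun u w) z (0, 1) =
        ((ux u z * fderiv ℝ (uy u) z (0,1) + uy u z * fderiv ℝ (ux u) z (0,1)) *
            (1 + ux u z ^ 2 + uy u z ^ 2)
          - ux u z * uy u z * (ux u z * fderiv ℝ (ux u) z (0,1)
              + uy u z * fderiv ℝ (uy u) z (0,1))) /
          Real.sqrt (1 + ux u z ^ 2 + uy u z ^ 2) ^ 3 := by
      simp only [Wfun]
      rw [quot_fderiv hP hQ hN1]
      simp only [ContinuousLinearMap.add_apply, ContinuousLinearMap.smul_apply,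
        ContinuousLinearMap.neg_apply, smul_eq_mul]
    have fB : fderiv ℝ (fun w => (1 + uy u w ^ 2) / Wfun u w) z (1, 0) =
        ((2 * uy u z * fderiv ℝ (ux u) z (0,1)) * (1 + ux u z ^ 2 + uy u z ^ 2)
          - (1 + uy u z ^ 2) * (ux u z * fderiv ℝ (ux u) z (1,0)
              + uy u z * fderiv ℝ (ux u) z (0,1))) /
          Real.sqrt (1 + ux u z ^ 2 + uy u z ^ 2) ^ 3 := by
      simp only [Wfun]
      rw [quot_fderiv hP hQ hN2]
      simp only [ContinuousLinearMap.add_apply, ContinuousLinearMap.smul_apply,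
        ContinuousLinearMap.neg_apply, smul_eq_mul]
      rw [hsymm]
      ring_nf
    have fC : fderiv ℝ (fun w => -(1 + ux u w ^ 2) / Wfun u w) z (0, 1) =
        ((-(2 * ux u z * fderiv ℝ (ux u) z (0,1))) * (1 + ux u z ^ 2 + uy u z ^ 2)
          + (1 + ux u z ^ 2) * (ux u z * fderiv ℝ (ux u) z (0,1)
              + uy u z * fderiv ℝ (uy u) z (0,1))) /
          Real.sqrt (1 + ux u z ^ 2 + uy u z ^ 2) ^ 3 := by
      simp only [Wfun]
      rw [quot_fderiv hP hQ hN3]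
      simp only [ContinuousLinearMap.add_apply, ContinuousLinearMap.smul_apply,
        ContinuousLinearMap.neg_apply, smul_eq_mul]
      ring_nf
    have fD : fderiv ℝ (fun w => -(ux u w * uy u w) / Wfun u w) z (1, 0) =
        ((-(ux u z * fderiv ℝ (ux u) z (0,1) + uy u z * fderiv ℝ (ux u) z (1,0))) *
            (1 + ux u z ^ 2 + uy u z ^ 2)
          + ux u z * uy u z * (ux u z * fderiv ℝ (ux u) z (1,0)
              + uy u z * fderiv ℝ (ux u) z (0,1))) /
          Real.sqrt (1 + ux u z ^ 2 + uy u z ^ 2) ^ 3 := by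
      simp only [Wfun]
      rw [quot_fderiv hP hQ hN4]
      simp only [ContinuousLinearMap.add_apply, ContinuousLinearMap.smul_apply,
        ContinuousLinearMap.neg_apply, smul_eq_mul]
      rw [hsymm]
      ring_nf
    have fE : fderiv ℝ (fun w => -(uy u w) / Wfun u w) z (0, 1) =
        ((-(fderiv ℝ (uy u) z (0,1))) * (1 + ux u z ^ 2 + uy u z ^ 2)
          + uy u z * (ux u z * fderiv ℝ (ux u) z (0,1)
              + uy u z * fderiv ℝ (uy u) z (0,1))) /
          Real.sqrt (1 + ux u z ^ 2 + uy u z ^ 2) ^ 3 := by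
      simp only [Wfun]
      rw [quot_fderiv hP hQ hN5]
      simp only [ContinuousLinearMap.add_apply, ContinuousLinearMap.smul_apply,
        ContinuousLinearMap.neg_apply, smul_eq_mul]
      ring_nf
    have fF : fderiv ℝ (fun w => ux u w / Wfun u w) z (1, 0) =
        (fderiv ℝ (ux u) z (1,0) * (1 + ux u z ^ 2 + uy u z ^ 2)
          - ux u z * (ux u z * fderiv ℝ (ux u) z (1,0)
              + uy u z * fderiv ℝ (ux u) z (0,1))) /
          Real.sqrt (1 + ux u z ^ 2 + uy u z ^ 2) ^ 3 := by
      simp only [Wfun]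
      rw [quot_fderiv hP hQ hN6, hsymm]
    constructor
    · intro hM
      refine ⟨?_, ?_, ?_⟩
      · rw [fA, fB]
        congr 1
        linear_combination ux u z * hM
      · rw [fC, fD]
        congr 1
        linear_combination uy u z * hM
      · rw [fE, fF]
        congr 1
        linear_combination (-1 : ℝ) * hM
    · rintro ⟨-, -, h3⟩
      rw [fE, fF, div_eq_div_iff hW3 hW3] at h3
      have h4 := mul_right_cancel₀ hW3 h3
      linear_combination (-1 : ℝ) * h4
  exact ⟨fun h z hz => (main z hz).1 (h z hz), fun h z hz => (main z hz).2 (h z hz)⟩
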